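/- Let n = 3 and let ω ∈ so(3) be nonzero. Then the adjoint orbit of E(3) through (ω,0), equipped with the subspace topology from so(3) × ℝ³, is homeomorphic to the set {(u,w) ∈ ℝ³ × ℝ³ : ‖u‖ = 1 and ⟨u,w⟩ = 0} (the tangent bundle of the 2-sphere, realized as a subspace of ℝ³ × ℝ³). -/

import Mathlib

open Matrix

abbrev Mat (n : ℕ) := Matrix (Fin n) (Fin n) ℝ
abbrev Vec (n : ℕ) := Fin n → ℝ

/-- `r` is an orthogonal matrix. -/
def IsOrth {n : ℕ} (r : Mat n) : Prop := r * rᵀ = 1 ∧ rᵀ * r = 1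

/-- `ω` is skew-symmetric. -/
def IsSkew {n : ℕ} (ω : Mat n) : Prop := ωᵀ = -ω

/-- Adjoint action of `(r,d) ∈ E(n)` on `(ω,v) ∈ so(n) × ℝⁿ`. -/
noncomputable def Ad {n : ℕ} (r : Mat n) (d : Vec n) (ω : Mat n) (v : Vec n) :
    Mat n × Vec n :=
  (r * ω * r⁻¹, r *ᵥ v - (r * ω * r⁻¹) *ᵥ d)

/-- The momentum map `μ(p,d) = ½(p dᵀ − d pᵀ)`. -/
noncomputable def mu {n : ℕ} (p d : Vec n) : Mat n :=
  (1/2 : ℝ) • (vecMulVec p d - vecMulVec d p)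

/-- Coadjoint action of `(r,d) ∈ E(n)` on `(L,p) ∈ so(n)* × (ℝⁿ)* ≃ so(n) × ℝⁿ`. -/
noncomputable def CoAd {n : ℕ} (r : Mat n) (d : Vec n) (L : Mat n) (p : Vec n) :
    Mat n × Vec n :=
  (r * L * r⁻¹ + mu (r *ᵥ p) d, r *ᵥ p)

noncomputable section
def hat (a : Vec 3) : Mat 3 := !![0, -a 2, a 1; a 2, 0, -a 0; -a 1, a 0, 0]
def vee (Ω : Mat 3) : Vec 3 := ![Ω 2 1, Ω 0 2, Ω 1 0]
def nsq (v : Vec 3) : ℝ := v ⬝ᵥ v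
lemma skew_apply {Ω : Mat 3} (h : IsSkew Ω) (i j : Fin 3) : Ω j i = - Ω i j := by
  have := congrFun (congrFun h i) j
  simpa [Matrix.transpose_apply] using this

lemma hat_vee_of_skew {Ω : Mat 3} (h : IsSkew Ω) : hat (vee Ω) = Ω := by
  have h00 := skew_apply h 0 0
  have h11 := skew_apply h 1 1
  have h22 := skew_apply h 2 2
  have h01 := skew_apply h 0 1
  have h02 := skew_apply h 0 2
  have h12 := skew_apply h 1 2
  ext i j
  fin_cases i <;> fin_cases j <;> simp [hat, vee] <;> linarith
lemma vee_hat (a : Vec 3) : vee (hat a) = a := by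
  ext i; fin_cases i <;> simp [hat, vee]
lemma conj_hat (A : Mat 3) (a : Vec 3) :
    A * hat a * Aᵀ = hat ((adjugate A)ᵀ *ᵥ a) := by
  ext i j
  fin_cases i <;> fin_cases j <;>
    (simp [hat, Matrix.mul_apply, Matrix.mulVec, Matrix.adjugate_fin_three,
      Fin.sum_univ_three, dotProduct]; ring)
lemma nsq_eq (v : Vec 3) : nsq v = v 0 ^ 2 + v 1 ^ 2 + v 2 ^ 2 := by
  simp [nsq, dotProduct, Fin.sum_univ_three]; ring

lemma nsq_pos {n : Vec 3} (h : n ≠ 0) : 0 < nsq n := by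
  obtain ⟨i, hi⟩ := Function.ne_iff.mp h
  rw [nsq_eq]
  fin_cases i <;> simp at hi <;> positivity

def Hh (n : Vec 3) : Mat 3 := 1 - (2 / nsq n) • vecMulVec n n

lemma Hh_symm (n : Vec 3) : (Hh n)ᵀ = Hh n := by
  have : (vecMulVec n n)ᵀ = vecMulVec n n := by
    ext i j; simp [Matrix.vecMulVec_apply, mul_comm]
  simp [Hh, Matrix.transpose_sub, Matrix.transpose_smul, this]

lemma Hh_mul_self {n : Vec 3} (h : n ≠ 0) : Hh n * Hh n = 1 := by
  have hs := (nsq_pos h).ne'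
  have hM : vecMulVec n n * vecMulVec n n = nsq n • vecMulVec n n := by
    ext i j
    simp [Matrix.mul_apply, Matrix.vecMulVec_apply, Fin.sum_univ_three, nsq,
      dotProduct]
    ring
  unfold Hh
  simp only [mul_sub, sub_mul, mul_one, one_mul, smul_mul_assoc,
    mul_smul_comm, hM, smul_smul]
  have h2 : 2 / nsq n * nsq n = 2 := div_mul_cancel₀ _ hs
  rw [h2]
  rw [smul_sub, smul_smul]
  have h3 : (2 : ℝ) / nsq n * 2 = 2 / nsq n + 2 / nsq n := by ring
  rw [h3, add_smul]
  abel

lemma Hh_det {n : Vec 3} (h : n ≠ 0) : (Hh n).det = -1 := by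
  have hs := (nsq_pos h).ne'
  have key : ∀ c : ℝ, ((1 : Mat 3) - c • vecMulVec n n).det
      = 1 - c * (n 0 ^ 2 + n 1 ^ 2 + n 2 ^ 2) := by
    intro c
    rw [Matrix.det_fin_three]
    simp [Matrix.sub_apply, Matrix.smul_apply, Matrix.one_apply,
      Matrix.vecMulVec_apply]
    ring
  rw [Hh, key, ← nsq_eq, div_mul_cancel₀ _ hs]
  norm_num

lemma Hh_mulVec (n : Vec 3) (x : Vec 3) :
    Hh n *ᵥ x = x - ((2 * (n ⬝ᵥ x)) / nsq n) • n := by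
  ext i
  fin_cases i <;>
    (simp [Hh, Matrix.mulVec, Matrix.one_apply, Matrix.vecMulVec_apply,
      Fin.sum_univ_three, dotProduct]; ring)
lemma orth_inv {r : Mat 3} (hr : IsOrth r) : r⁻¹ = rᵀ :=
  Matrix.inv_eq_right_inv hr.1

lemma orth_detsq {r : Mat 3} (hr : IsOrth r) : r.det * r.det = 1 := by
  have := congrArg Matrix.det hr.1
  rwa [Matrix.det_mul, Matrix.det_transpose, Matrix.det_one] at this

lemma orth_adjugate {r : Mat 3} (hr : IsOrth r) :
    adjugate r = r.det • rᵀ := by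
  have h1 : rᵀ * (r * adjugate r) = rᵀ * (r.det • 1) := by
    rw [Matrix.mul_adjugate]
  rwa [← mul_assoc, hr.2, one_mul, Matrix.mul_smul, mul_one] at h1

lemma hat_isSkew (a : Vec 3) : IsSkew (hat a) := by
  ext i j
  fin_cases i <;> fin_cases j <;> simp [hat]

lemma hat_smul (t : ℝ) (a : Vec 3) : hat (t • a) = t • hat a := by
  ext i j
  fin_cases i <;> fin_cases j <;> simp [hat] <;> ring

lemma hat_zero : hat 0 = 0 := by
  ext i j
  fin_cases i <;> fin_cases j <;>
    simp [hat, Matrix.vecHead, Matrix.vecTail, Function.comp]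

lemma nsq_smul (t : ℝ) (v : Vec 3) : nsq (t • v) = t ^ 2 * nsq v := by
  simp [nsq, dotProduct, Fin.sum_univ_three]; ring

lemma nsq_mulVec_orth {r : Mat 3} (hr : IsOrth r) (a : Vec 3) :
    nsq (r *ᵥ a) = nsq a := by
  unfold nsq
  rw [Matrix.dotProduct_mulVec, ← Matrix.mulVec_transpose,
    Matrix.mulVec_mulVec, hr.2, Matrix.one_mulVec]

lemma dot_hat_self (b d : Vec 3) : b ⬝ᵥ (hat b *ᵥ d) = 0 := by
  simp [hat, dotProduct, Matrix.mulVec, Fin.sum_univ_three]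
  ring

lemma hat_hat (b v : Vec 3) :
    hat b *ᵥ (hat b *ᵥ v) = (b ⬝ᵥ v) • b - nsq b • v := by
  ext i
  fin_cases i <;>
    (simp [hat, dotProduct, Matrix.mulVec, nsq, Fin.sum_univ_three]; ring)
lemma conj_hat_orth {r : Mat 3} (hr : IsOrth r) (a : Vec 3) :
    r * hat a * rᵀ = hat (r.det • (r *ᵥ a)) := by
  rw [conj_hat, orth_adjugate hr, Matrix.transpose_smul, Matrix.transpose_transpose,
    Matrix.smul_mulVec]

lemma Hh_isOrth {n : Vec 3} (h : n ≠ 0) : IsOrth (Hh n) := by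
  constructor <;> rw [Hh_symm] <;> exact Hh_mul_self h

lemma mem_orbit_of_r {ω Ω : Mat 3} {v : Vec 3} {r : Mat 3}
    (hω : IsSkew ω) (hΩ : IsSkew Ω) (hr : IsOrth r)
    (hra : r.det • (r *ᵥ vee ω) = vee Ω) (hnz : nsq (vee Ω) ≠ 0)
    (hperp : vee Ω ⬝ᵥ v = 0) :
    ∃ r' d, IsOrth r' ∧ Ad r' d ω 0 = (Ω, v) := by
  refine ⟨r, (1 / nsq (vee Ω)) • (hat (vee Ω) *ᵥ v), hr, ?_⟩
  have hconj : r * ω * r⁻¹ = Ω := by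
    rw [orth_inv hr, ← hat_vee_of_skew hω, conj_hat_orth hr, hra, hat_vee_of_skew hΩ]
  unfold Ad
  rw [hconj]
  refine Prod.ext rfl ?_
  show r *ᵥ 0 - Ω *ᵥ _ = v
  rw [Matrix.mulVec_zero]
  nth_rewrite 1 [← hat_vee_of_skew hΩ]
  rw [Matrix.mulVec_smul, hat_hat, hperp,
    show ((0:ℝ) • vee Ω - nsq (vee Ω) • v) = -(nsq (vee Ω) • v) by
      rw [zero_smul, zero_sub],
    smul_neg, smul_smul, one_div, inv_mul_cancel₀ hnz, one_smul, zero_sub, neg_neg]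
lemma vee_ne_zero {ω : Mat 3} (hω : IsSkew ω) (hne : ω ≠ 0) : vee ω ≠ 0 := by
  intro h
  apply hne
  rw [← hat_vee_of_skew hω, h, hat_zero]

lemma mem_orbit_iff {ω : Mat 3} (hω : IsSkew ω) (hne : ω ≠ 0) (x : Mat 3 × Vec 3) :
    (∃ r d, IsOrth r ∧ Ad r d ω 0 = x) ↔
    (IsSkew x.1 ∧ nsq (vee x.1) = nsq (vee ω) ∧ vee x.1 ⬝ᵥ x.2 = 0) := by
  constructor
  · rintro ⟨r, d, hr, rfl⟩
    have h1 : r * ω * r⁻¹ = hat (r.det • (r *ᵥ vee ω)) := by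
      rw [orth_inv hr]
      nth_rewrite 1 [← hat_vee_of_skew hω]
      rw [conj_hat_orth hr]
    refine ⟨?_, ?_, ?_⟩
    · show IsSkew (r * ω * r⁻¹)
      rw [h1]; exact hat_isSkew _
    · show nsq (vee (r * ω * r⁻¹)) = _
      rw [h1, vee_hat, nsq_smul, nsq_mulVec_orth hr, sq, orth_detsq hr, one_mul]
    · show vee (r * ω * r⁻¹) ⬝ᵥ (r *ᵥ 0 - (r * ω * r⁻¹) *ᵥ d) = 0
      rw [Matrix.mulVec_zero, zero_sub, h1, vee_hat, dotProduct_neg,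
        dot_hat_self, neg_zero]
  · obtain ⟨Ω, v⟩ := x
    rintro ⟨hΩ, hn, hp⟩
    simp only at hΩ hn hp
    have ha : vee ω ≠ 0 := vee_ne_zero hω hne
    have hnz : nsq (vee Ω) ≠ 0 := by rw [hn]; exact (nsq_pos ha).ne'
    have hb : vee Ω ≠ 0 := by
      intro h; apply hnz; rw [h]; simp [nsq]
    by_cases hab : vee ω + vee Ω = 0
    · have hba : vee Ω = -vee ω := eq_neg_of_add_eq_zero_right hab
      by_cases h0 : vee ω 0 = 0
      · have hn0 : (![1,0,0] : Vec 3) ≠ 0 := by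
          intro h; have := congrFun h 0; simp at this
        have hdot : (![1,0,0] : Vec 3) ⬝ᵥ vee ω = 0 := by
          simp [dotProduct, Fin.sum_univ_three, h0]
        refine mem_orbit_of_r hω hΩ (Hh_isOrth hn0) ?_ hnz hp
        rw [Hh_mulVec, hdot, Hh_det hn0, hba]
        simp
      · have hn0 : (![vee ω 1, -vee ω 0, 0] : Vec 3) ≠ 0 := by
          intro h; have := congrFun h 1; simp at this; exact h0 this
        have hdot : (![vee ω 1, -vee ω 0, 0] : Vec 3) ⬝ᵥ vee ω = 0 := by
          simp [dotProduct, Fin.sum_univ_three]; ring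
        refine mem_orbit_of_r hω hΩ (Hh_isOrth hn0) ?_ hnz hp
        rw [Hh_mulVec, hdot, Hh_det hn0, hba]
        simp
    · have hnsab : nsq (vee ω + vee Ω) ≠ 0 := (nsq_pos hab).ne'
      have hn2 : vee Ω 0 ^ 2 + vee Ω 1 ^ 2 + vee Ω 2 ^ 2
          = vee ω 0 ^ 2 + vee ω 1 ^ 2 + vee ω 2 ^ 2 := by
        rw [← nsq_eq, ← nsq_eq]; exact hn
      have key : nsq (vee ω + vee Ω) = 2 * ((vee ω + vee Ω) ⬝ᵥ vee ω) := by
        rw [nsq_eq]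
        simp [dotProduct, Fin.sum_univ_three, Pi.add_apply]
        linear_combination hn2
      have hra : Hh (vee ω + vee Ω) *ᵥ vee ω = -vee Ω := by
        rw [Hh_mulVec]
        rw [show 2 * ((vee ω + vee Ω) ⬝ᵥ vee ω) / nsq (vee ω + vee Ω) = 1 by
          rw [← key, div_self hnsab]]
        rw [one_smul]
        ext i
        simp [Pi.add_apply, Pi.sub_apply, Pi.neg_apply]
      refine mem_orbit_of_r hω hΩ (Hh_isOrth hab) ?_ hnz hp
      rw [Hh_det hab, hra]
      simp
lemma continuous_vee : Continuous vee := by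
  unfold vee
  refine continuous_pi fun i => ?_
  fin_cases i <;> simp <;>
    exact (continuous_apply _).comp (continuous_apply _)

lemma continuous_hat : Continuous hat := by
  refine continuous_matrix fun i j => ?_
  fin_cases i <;> fin_cases j <;> simp [hat] <;>
    first
      | exact continuous_const
      | exact continuous_apply _
      | exact (continuous_apply _).neg

open scoped RealInnerProductSpace

lemma e_norm (u : EuclideanSpace ℝ (Fin 3)) :
    ‖u‖ = Real.sqrt (nsq (EuclideanSpace.equiv (Fin 3) ℝ u)) := by
  rw [EuclideanSpace.norm_eq, nsq_eq]
  congr 1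
  simp [Fin.sum_univ_three, Real.norm_eq_abs, sq_abs]

lemma e_inner (u w : EuclideanSpace ℝ (Fin 3)) :
    ⟪u, w⟫ = (EuclideanSpace.equiv (Fin 3) ℝ u) ⬝ᵥ (EuclideanSpace.equiv (Fin 3) ℝ w) := by
  rw [PiLp.inner_apply]
  simp [RCLike.inner_apply, dotProduct, mul_comm]

open scoped RealInnerProductSpace in
theorem stmt18 (ω : Mat 3) (hω : IsSkew ω) (hne : ω ≠ 0) :
    Nonempty
      (({x : Mat 3 × Vec 3 | ∃ (r : Mat 3) (d : Vec 3), IsOrth r ∧ Ad r d ω 0 = x}) ≃ₜ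
       ({y : EuclideanSpace ℝ (Fin 3) × EuclideanSpace ℝ (Fin 3) |
          ‖y.1‖ = 1 ∧ ⟪y.1, y.2⟫ = 0})) := by
  classical
  have ha : vee ω ≠ 0 := vee_ne_zero hω hne
  set c : ℝ := Real.sqrt (nsq (vee ω)) with hcdef
  have hc : 0 < c := Real.sqrt_pos.mpr (nsq_pos ha)
  have hc2 : c ^ 2 = nsq (vee ω) := Real.sq_sqrt (nsq_pos ha).le
  set e := EuclideanSpace.equiv (Fin 3) ℝ with hedef
  refine ⟨?_⟩
  refine
    { toFun := fun x => ⟨(e.symm (c⁻¹ • vee x.1.1), e.symm x.1.2), ?_⟩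
      invFun := fun y => ⟨(hat (c • e y.1.1), e y.1.2), ?_⟩
      left_inv := ?_
      right_inv := ?_
      continuous_toFun := ?_
      continuous_invFun := ?_ }
  · -- membership in target
    obtain ⟨hskew, hn, hp⟩ := (mem_orbit_iff hω hne _).mp x.2
    constructor
    · show ‖e.symm (c⁻¹ • vee x.1.1)‖ = 1
      rw [e_norm, ContinuousLinearEquiv.apply_symm_apply, nsq_smul, hn, ← hc2]
      rw [show c⁻¹ ^ 2 * c ^ 2 = 1 by field_simp]
      exact Real.sqrt_one
    · show ⟪e.symm (c⁻¹ • vee x.1.1), e.symm x.1.2⟫ = 0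
      rw [e_inner, ContinuousLinearEquiv.apply_symm_apply,
        ContinuousLinearEquiv.apply_symm_apply, smul_dotProduct, hp,
        smul_zero]
  · -- membership in orbit
    obtain ⟨hn1, hp0⟩ := y.2
    rw [Set.mem_setOf_eq, mem_orbit_iff hω hne]
    have hnu : nsq (e y.1.1) = 1 := by
      rw [e_norm] at hn1
      exact Real.sqrt_eq_one.mp hn1
    refine ⟨hat_isSkew _, ?_, ?_⟩
    · show nsq (vee (hat (c • e y.1.1))) = _
      rw [vee_hat, nsq_smul, hnu, mul_one, hc2]
    · show vee (hat (c • e y.1.1)) ⬝ᵥ e y.1.2 = 0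
      rw [vee_hat, smul_dotProduct, ← e_inner, hp0, smul_zero]
  · -- left inverse
    intro x
    have hskew : IsSkew x.1.1 := ((mem_orbit_iff hω hne _).mp x.2).1
    apply Subtype.ext
    refine Prod.ext ?_ ?_
    · show hat (c • e (e.symm (c⁻¹ • vee x.1.1))) = x.1.1
      rw [ContinuousLinearEquiv.apply_symm_apply, smul_smul,
        mul_inv_cancel₀ hc.ne', one_smul, hat_vee_of_skew hskew]
    · show e (e.symm x.1.2) = x.1.2
      exact ContinuousLinearEquiv.apply_symm_apply _ _
  · -- right inverse
    intro y
    apply Subtype.ext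
    refine Prod.ext ?_ ?_
    · show e.symm (c⁻¹ • vee (hat (c • e y.1.1))) = y.1.1
      rw [vee_hat, smul_smul, inv_mul_cancel₀ hc.ne', one_smul,
        ContinuousLinearEquiv.symm_apply_apply]
    · show e.symm (e y.1.2) = y.1.2
      exact ContinuousLinearEquiv.symm_apply_apply _ _
  · -- continuity of toFun
    apply Continuous.subtype_mk
    refine Continuous.prodMk ?_ ?_
    · exact e.symm.continuous.comp
        ((continuous_vee.comp (continuous_fst.comp continuous_subtype_val)).const_smul c⁻¹)
    · exact e.symm.continuous.comp (continuous_snd.comp continuous_subtype_val)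
  · -- continuity of invFun
    apply Continuous.subtype_mk
    refine Continuous.prodMk ?_ ?_
    · exact continuous_hat.comp
        ((e.continuous.comp (continuous_fst.comp continuous_subtype_val)).const_smul c)
    · exact e.continuous.comp (continuous_snd.comp continuous_subtype_val)
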